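/- Well-definedness of the logarithmic distribution log^{[k]}: for every continuous K-valued character σ of ℤ_p^× there exists w = w(σ) ∈ K such that for every integer k ≥ 0 and every z ∈ U, z^k · σ^{(k)}(z) = w(w−1)⋯(w−k+1) · σ(z), where σ^{(k)} denotes the k-th derivative of σ within U. In particular, for each k the function z ↦ (d^kσ/dz^k)(z) · z^k / σ(z) is constant on ℤ_p^×, and its constant value is log^{[k]}(σ) = ∏_{i=0}^{k−1}(w(σ) − i). -/

import Mathlib

open Set Filter Topology

private lemma iteratedDerivWithin_eq_iteratedDeriv_of_isOpen
    {𝕜 : Type*} [NontriviallyNormedField 𝕜]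
    {F : Type*} [NormedAddCommGroup F] [NormedSpace 𝕜 F]
    {f : 𝕜 → F} {s : Set 𝕜} (hs : IsOpen s) :
    ∀ n : ℕ, ∀ x ∈ s, iteratedDerivWithin n f s x = iteratedDeriv n f x := by
  intro n
  induction n with
  | zero => intro x hx; simp [iteratedDerivWithin_zero, iteratedDeriv_zero]
  | succ n ih =>
    intro x hx
    rw [iteratedDerivWithin_succ, iteratedDeriv_succ,
      derivWithin_congr (fun y hy => ih y hy) (ih x hx),
      derivWithin_of_mem_nhds (hs.mem_nhds hx)]

/-- **Well-definedness of the logarithmic distribution `log^{[k]}`**: for every continuous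
`K`-valued character `σ` of `ℤ_p^×` (identified with `U = {z ∈ ℚ_p : ‖z‖ = 1}`), there is
`w = w(σ) ∈ K` such that for every `k ≥ 0` and every `z ∈ U`,
`z^k · σ^{(k)}(z) = w(w−1)⋯(w−k+1) · σ(z)`, where `σ^{(k)}` is the `k`-th derivative of
`σ` within `U`.  In particular `z ↦ σ^{(k)}(z)·z^k/σ(z)` is constant on `ℤ_p^×`, with
constant value `log^{[k]}(σ) = ∏_{i=0}^{k−1} (w(σ) − i)`. -/
theorem log_distribution_well_defined
    (p : ℕ) [Fact p.Prime] (K : Type*) [NontriviallyNormedField K]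
    [NormedAlgebra ℚ_[p] K] [CompleteSpace K] [IsUltrametricDist K]
    (σ : ℚ_[p] → K)
    (hcont : ContinuousOn σ {z : ℚ_[p] | ‖z‖ = 1})
    (hone : σ 1 = 1)
    (hmul : ∀ x ∈ {z : ℚ_[p] | ‖z‖ = 1}, ∀ y ∈ {z : ℚ_[p] | ‖z‖ = 1},
      σ (x * y) = σ x * σ y) :
    ∃ w : K, ∀ k : ℕ, ∀ z ∈ {z : ℚ_[p] | ‖z‖ = 1},
      (z ^ k) • iteratedDerivWithin k σ {z : ℚ_[p] | ‖z‖ = 1} z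
        = (∏ i ∈ Finset.range k, (w - (i : K))) * σ z := by
  set U : Set ℚ_[p] := {z : ℚ_[p] | ‖z‖ = 1} with hUdef
  have hUopen : IsOpen U := by
    have : U = Metric.sphere (0 : ℚ_[p]) 1 := by
      ext z; simp [hUdef, Metric.mem_sphere, dist_zero_right]
    rw [this]
    exact IsUltrametricDist.isOpen_sphere 0 one_ne_zero
  have hmulU : ∀ x ∈ U, ∀ y ∈ U, x * y ∈ U := by
    intro x hx y hy
    simp only [hUdef, mem_setOf_eq] at *
    rw [norm_mul, hx, hy, one_mul]
  have hinvU : ∀ x ∈ U, x⁻¹ ∈ U := by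
    intro x hx
    simp only [hUdef, mem_setOf_eq] at *
    rw [norm_inv, hx, inv_one]
  have h1U : (1 : ℚ_[p]) ∈ U := by simp [hUdef]
  have hne : ∀ x ∈ U, x ≠ 0 := by
    intro x hx h
    rw [hUdef, mem_setOf_eq, h, norm_zero] at hx
    norm_num at hx
  by_cases hd : ∃ z₀ ∈ U, DifferentiableWithinAt ℚ_[p] σ U z₀
  · -- σ is differentiable at some point, hence everywhere on U
    obtain ⟨z₀, hz₀, hdz₀⟩ := hd
    have hz₀' : DifferentiableAt ℚ_[p] σ z₀ := hdz₀.differentiableAt (hUopen.mem_nhds hz₀)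
    have hdiff : ∀ z ∈ U, DifferentiableAt ℚ_[p] σ z := by
      intro z hz
      set a := z * z₀⁻¹ with ha
      have haU : a ∈ U := hmulU z hz _ (hinvU z₀ hz₀)
      have ha0 : a ≠ 0 := hne a haU
      have haz : a⁻¹ * z = z₀ := by
        field_simp [ha, hne z hz]
        rw [ha, mul_assoc, inv_mul_cancel₀ (hne z₀ hz₀), mul_one]
      have htau : DifferentiableAt ℚ_[p] (fun x => σ a * σ (a⁻¹ * x)) z := by
      -- composition of σ (differentiable at z₀ = a⁻¹ z) with x ↦ a⁻¹ x, times a constant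
        have h1 : DifferentiableAt ℚ_[p] (fun x : ℚ_[p] => a⁻¹ * x) z :=
          (differentiableAt_id.const_mul _)
        have h2 : DifferentiableAt ℚ_[p] σ (a⁻¹ * z) := haz ▸ hz₀'
        exact (h2.comp z h1).const_mul (σ a)
      have heq : σ =ᶠ[𝓝 z] fun x => σ a * σ (a⁻¹ * x) := by
        filter_upwards [hUopen.mem_nhds hz] with x hx
        have hxeq : a * (a⁻¹ * x) = x := by
          rw [← mul_assoc, mul_inv_cancel₀ ha0, one_mul]
        calc σ x = σ (a * (a⁻¹ * x)) := by rw [hxeq]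
          _ = σ a * σ (a⁻¹ * x) := hmul a haU _ (hmulU _ (hinvU a haU) _ hx)
      exact htau.congr_of_eventuallyEq heq
    set w : K := deriv σ 1 with hw
    -- the key differential equation : z • σ'(z) = w * σ(z)
    have key : ∀ z ∈ U, z • deriv σ z = w * σ z := by
      intro z hz
      have h1 : HasDerivAt (fun x : ℚ_[p] => σ (x * z)) (z • deriv σ z) 1 := by
        have hmz : HasDerivAt (fun x : ℚ_[p] => x * z) z 1 := by
          simpa using (hasDerivAt_id (1 : ℚ_[p])).mul_const z
        have hσz : HasDerivAt σ (deriv σ z) z := (hdiff z hz).hasDerivAt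
        simpa [Function.comp_def] using HasDerivAt.scomp_of_eq 1 hσz hmz (one_mul z).symm
      have h2 : HasDerivAt (fun x : ℚ_[p] => σ z * σ x) (σ z * w) 1 :=
        (hdiff 1 h1U).hasDerivAt.const_mul (σ z)
      have heq : (fun x : ℚ_[p] => σ (x * z)) =ᶠ[𝓝 1] fun x => σ z * σ x := by
        filter_upwards [hUopen.mem_nhds h1U] with x hx
        rw [hmul x hx z hz, mul_comm]
      have h2' : HasDerivAt (fun x : ℚ_[p] => σ (x * z)) (σ z * w) 1 :=
        h2.congr_of_eventuallyEq heq
      rw [h1.unique h2', mul_comm]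
    -- main claim with ordinary iterated derivatives
    have main : ∀ k : ℕ, ∀ z ∈ U,
        (z ^ k) • iteratedDeriv k σ z = (∏ i ∈ Finset.range k, (w - (i : K))) * σ z := by
      intro k
      induction k with
      | zero => intro z hz; simp
      | succ k ih =>
        intro z hz
        have hz0 : z ≠ 0 := hne z hz
        have hzk : z ^ k ≠ 0 := pow_ne_zero _ hz0
        set c : K := ∏ i ∈ Finset.range k, (w - (i : K)) with hc
        have hev : iteratedDeriv k σ =ᶠ[𝓝 z] fun y => (y ^ k)⁻¹ • (c * σ y) := by
          filter_upwards [hUopen.mem_nhds hz] with y hy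
          have := ih y hy
          rw [← this, smul_smul, inv_mul_cancel₀ (pow_ne_zero _ (hne y hy)), one_smul]
        have hinv : HasDerivAt (fun y : ℚ_[p] => (y ^ k)⁻¹)
            (-(↑k * z ^ (k - 1)) / (z ^ k) ^ 2) z := (hasDerivAt_pow k z).inv hzk
        have hσ' : HasDerivAt (fun y : ℚ_[p] => c * σ y) (c * deriv σ z) z :=
          (hdiff z hz).hasDerivAt.const_mul c
        have hders : HasDerivAt (fun y : ℚ_[p] => (y ^ k)⁻¹ • (c * σ y))
            ((z ^ k)⁻¹ • (c * deriv σ z) + (-(↑k * z ^ (k - 1)) / (z ^ k) ^ 2) • (c * σ z)) z :=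
          hinv.smul hσ'
        rw [iteratedDeriv_succ, hev.deriv_eq, hders.deriv]
        -- now pure algebra, using `key`
        have hds : deriv σ z = z⁻¹ • (w * σ z) := by
          rw [← key z hz, smul_smul, inv_mul_cancel₀ hz0, one_smul]
        rw [hds]
        have hzz : (↑k : ℚ_[p]) * z ^ (k - 1) * z = ↑k * z ^ k := by
          cases k with
          | zero => simp
          | succ m => rw [Nat.add_sub_cancel]; ring
        rw [Finset.prod_range_succ]
        -- convert scalar multiplications to multiplications in K
        simp only [smul_add, smul_smul, Algebra.smul_def, map_mul, map_inv₀, map_pow,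
          map_neg, map_div₀, map_natCast, map_ofNat, Nat.cast_succ]
        have hζ : algebraMap ℚ_[p] K z ≠ 0 := by
          simpa using (algebraMap ℚ_[p] K).injective.ne hz0
        have hzzK : (↑k : K) * (algebraMap ℚ_[p] K z) ^ (k - 1) * algebraMap ℚ_[p] K z
            = ↑k * (algebraMap ℚ_[p] K z) ^ k := by
          have := congrArg (algebraMap ℚ_[p] K) hzz
          simpa [map_mul, map_pow, map_natCast] using this
        set ζ : K := algebraMap ℚ_[p] K z with hζdef
        field_simp
        linear_combination (-(ζ ^ (k + 1))) * c * σ z * hzzK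
    refine ⟨w, fun k z hz => ?_⟩
    rw [iteratedDerivWithin_eq_iteratedDeriv_of_isOpen hUopen k z hz]
    exact main k z hz
  · -- σ is nowhere differentiable on U : take w = 0
    push_neg at hd
    refine ⟨0, fun k z hz => ?_⟩
    cases k with
    | zero => simp
    | succ n =>
      have hzero : ∀ m : ℕ, ∀ z ∈ U, iteratedDerivWithin (m + 1) σ U z = 0 := by
        intro m
        induction m with
        | zero =>
          intro z hz
          rw [iteratedDerivWithin_one]
          exact derivWithin_zero_of_not_differentiableWithinAt (hd z hz)
        | succ m ih =>
          intro z hz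
          rw [iteratedDerivWithin_succ,
            derivWithin_congr (fun y hy => ih y hy) (ih z hz)]
          exact congrFun (derivWithin_const (c := (0 : K)) (s := U)) z
      rw [hzero n z hz, smul_zero]
      rw [Finset.prod_eq_zero (Finset.mem_range.mpr n.succ_pos) (by simp)]
      rw [zero_mul]
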